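/- Let n, k ∈ ℕ with 2 ≤ k ≤ n−2 and let 𝒫 = (P,w) be a weighted tree with leaf set [n]. If the leaves i and l are neighbours, then the value D_{{i}∪X}(𝒫) − D_{{l}∪X}(𝒫) does not depend on the choice of the (k−1)-subset X of [n]−{i,l}. -/

import Mathlib

/-- A weighted finite tree with leaf set labelled by `Fin n`:
a finite vertex type `V`, a tree `G` on `V`, an injective labelling `leaf` of the
degree-one vertices by `Fin n` (every vertex of degree one is a labelled leaf),
and a weight function `w` on edges (zero off the edge set). -/
structure WTree (n : ℕ) where
  V : Type
  fintypeV : Fintype V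
  G : SimpleGraph V
  isTree : G.IsTree
  leaf : Fin n → V
  leafInj : Function.Injective leaf
  leafSpec : ∀ v : V, (G.neighborSet v).ncard = 1 ↔ v ∈ Set.range leaf
  w : Sym2 V → ℝ
  wSupport : ∀ e, e ∉ G.edgeSet → w e = 0

namespace WTree

variable {n : ℕ}

/-- The degree of a vertex. -/
noncomputable def deg (T : WTree n) (v : T.V) : ℕ := (T.G.neighborSet v).ncard

/-- A node is a vertex of degree `> 2`. -/
def IsNode (T : WTree n) (v : T.V) : Prop := 2 < T.deg v

/-- A tree is essential if it has no vertices of degree `2`. -/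
def Essential (T : WTree n) : Prop := ∀ v : T.V, T.deg v ≠ 2

/-- The set of edges lying on the path between two vertices. -/
def pathEdges (T : WTree n) (u v : T.V) : Set (Sym2 T.V) :=
  {e | ∃ p : T.G.Walk u v, p.IsPath ∧ e ∈ p.edges}

/-- The edge set of the minimal subtree containing the leaves in `S`. -/
def subtreeEdges (T : WTree n) (S : Set (Fin n)) : Set (Sym2 T.V) :=
  {e | ∃ i ∈ S, ∃ j ∈ S, e ∈ T.pathEdges (T.leaf i) (T.leaf j)}

/-- `D_I(T)`: the weight of the minimal subtree of `T` containing the leaves in `I`. -/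
noncomputable def D (T : WTree n) (I : Finset (Fin n)) : ℝ :=
  ∑ᶠ e ∈ T.subtreeEdges ↑I, T.w e

/-- The total weight of the tree. -/
noncomputable def Dtot (T : WTree n) : ℝ := ∑ᶠ e ∈ T.G.edgeSet, T.w e

/-- An edge is a twig edge if it lies on the path from some leaf to the nearest node. -/
def IsTwigEdge (T : WTree n) (e : Sym2 T.V) : Prop :=
  ∃ (i : Fin n) (v : T.V), T.IsNode v ∧
    ∃ p : T.G.Walk (T.leaf i) v, p.IsPath ∧
      (∀ u ∈ p.support, T.IsNode u → u = v) ∧ e ∈ p.edges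

/-- Internal-nonzero-weighted: every internal (non-twig) edge has nonzero weight. -/
def InternalNonzero (T : WTree n) : Prop :=
  ∀ e ∈ T.G.edgeSet, ¬ T.IsTwigEdge e → T.w e ≠ 0

/-- Positive-weighted: all edge weights are positive. -/
def PositiveWeighted (T : WTree n) : Prop := ∀ e ∈ T.G.edgeSet, 0 < T.w e

/-- The leaves lying on the side of vertex `a` after removing the edge `e`. -/
def sideLeaves (T : WTree n) (e : Sym2 T.V) (a : T.V) : Set (Fin n) :=
  {i | e ∉ T.pathEdges (T.leaf i) a}

/-- A pseudostar of kind `(n, k)`: every edge divides the leaf set into two parts,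
at least one of which has cardinality `≥ k`. -/
def IsPseudostar (T : WTree n) (k : ℕ) : Prop :=
  ∀ a b : T.V, T.G.Adj a b →
    k ≤ (T.sideLeaves s(a, b) a).ncard ∨ k ≤ (T.sideLeaves s(a, b) b).ncard

/-- `T` realizes the family `D₀` of `k`-weights. -/
def Realizes (T : WTree n) (k : ℕ) (D₀ : Finset (Fin n) → ℝ) : Prop :=
  ∀ I : Finset (Fin n), I.card = k → T.D I = D₀ I

/-- Two leaves are neighbours if the path between them contains exactly one node. -/
def Neighbours (T : WTree n) (i j : Fin n) : Prop :=
  i ≠ j ∧ ∃ p : T.G.Walk (T.leaf i) (T.leaf j), p.IsPath ∧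
    ∃! v : T.V, v ∈ p.support ∧ T.IsNode v

/-- The Buneman index `⟨i,j | l,m⟩` holds iff the paths `i–j` and `l–m` are disjoint,
equivalently in `T|_{i,j,l,m}` the leaves `i,j` are neighbours, `l,m` are neighbours
and `i,l` are not neighbours. -/
def Buneman (T : WTree n) (i j l m : Fin n) : Prop :=
  ∀ (p : T.G.Walk (T.leaf i) (T.leaf j)) (q : T.G.Walk (T.leaf l) (T.leaf m)),
    p.IsPath → q.IsPath → ∀ v : T.V, v ∈ p.support → v ∉ q.support

/-- The minimal subtree spanned by the four leaves `i,j,l,m` is a star (i.e. all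
pairwise paths share a common vertex). -/
def StarQuartet (T : WTree n) (i j l m : Fin n) : Prop :=
  ∃ c : T.V, ∀ x ∈ ({i, j, l, m} : Set (Fin n)), ∀ y ∈ ({i, j, l, m} : Set (Fin n)),
    x ≠ y → ∀ p : T.G.Walk (T.leaf x) (T.leaf y), p.IsPath → c ∈ p.support

/-- A cherry: a set of leaves pairwise neighbours. -/
def IsCherry (T : WTree n) (C : Set (Fin n)) : Prop :=
  ∀ i ∈ C, ∀ j ∈ C, i ≠ j → T.Neighbours i j

/-- A complete cherry: a cherry not strictly contained in another cherry. -/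
def IsCompleteCherry (T : WTree n) (C : Set (Fin n)) : Prop :=
  T.IsCherry C ∧ ¬ ∃ C' : Set (Fin n), T.IsCherry C' ∧ C ⊂ C'

/-- A star is a tree with only one node. -/
def IsStar (T : WTree n) : Prop := ∃! v : T.V, T.IsNode v

/-- `x` is the median of the three leaves `a,b,c`: it lies on all three pairwise paths. -/
def IsMedian (T : WTree n) (a b c : Fin n) (x : T.V) : Prop :=
  (∀ p : T.G.Walk (T.leaf a) (T.leaf b), p.IsPath → x ∈ p.support) ∧
  (∀ p : T.G.Walk (T.leaf a) (T.leaf c), p.IsPath → x ∈ p.support) ∧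
  (∀ p : T.G.Walk (T.leaf b) (T.leaf c), p.IsPath → x ∈ p.support)

/-- The weight of the twig associated to the leaf `i` (the path from the leaf to the
nearest node). -/
noncomputable def twigWeight (T : WTree n) (i : Fin n) : ℝ :=
  ∑ᶠ e ∈ {e : Sym2 T.V | ∃ v : T.V, T.IsNode v ∧
      ∃ p : T.G.Walk (T.leaf i) v, p.IsPath ∧
        (∀ u ∈ p.support, T.IsNode u → u = v) ∧ e ∈ p.edges}, T.w e

/-- Two weighted trees with leaf set `Fin n` are equal (isomorphic respecting the
leaf labels and the weights). -/
def Isom (T T' : WTree n) : Prop :=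
  ∃ φ : T.V ≃ T'.V,
    (∀ a b : T.V, T.G.Adj a b ↔ T'.G.Adj (φ a) (φ b)) ∧
    (∀ i : Fin n, φ (T.leaf i) = T'.leaf i) ∧
    (∀ a b : T.V, T.w s(a, b) = T'.w s(φ a, φ b))

/-- `T'` is obtained from `T` by the `k`-IO operation on the edge `{a, b}`:
the edge divides the leaf set into two parts each of cardinality `< k`; it is
contracted (via the quotient map `φ`) and `w{a,b}/k` is added to the weight of
every twig (i.e. to every pendant edge). -/
def IOStepOn (k : ℕ) (T T' : WTree n) (a b : T.V) : Prop :=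
  T.G.Adj a b ∧
  (T.sideLeaves s(a, b) a).ncard < k ∧ (T.sideLeaves s(a, b) b).ncard < k ∧
  ∃ φ : T.V → T'.V,
    Function.Surjective φ ∧ φ a = φ b ∧
    (∀ x y : T.V, φ x = φ y → x = y ∨ s(x, y) = s(a, b)) ∧
    (∀ i : Fin n, φ (T.leaf i) = T'.leaf i) ∧
    (∀ u v : T'.V, T'.G.Adj u v ↔
      ∃ x y : T.V, φ x = u ∧ φ y = v ∧ T.G.Adj x y ∧ s(x, y) ≠ s(a, b)) ∧
    (∀ x y : T.V, T.G.Adj x y → s(x, y) ≠ s(a, b) →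
      ((∃ i : Fin n, T.leaf i = x ∨ T.leaf i = y) →
        T'.w s(φ x, φ y) = T.w s(x, y) + T.w s(a, b) / k) ∧
      (¬ (∃ i : Fin n, T.leaf i = x ∨ T.leaf i = y) →
        T'.w s(φ x, φ y) = T.w s(x, y)))

/-- `T'` is obtained from `T` by a `k`-IO operation. -/
def IOStep (k : ℕ) (T T' : WTree n) : Prop := ∃ a b : T.V, IOStepOn k T T' a b

/-- `T'` is obtained from `T` by a `k`-OI operation (the inverse of a `k`-IO operation). -/
def OIStep (k : ℕ) (T T' : WTree n) : Prop := IOStep k T' T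

/-- `T'` is obtained from `T` by inserting an internal edge of weight `0`
(the inverse of contracting it). -/
def InsertZeroStep (T T' : WTree n) : Prop :=
  ∃ a b : T'.V, T'.G.Adj a b ∧ ¬ T'.IsTwigEdge s(a, b) ∧ T'.w s(a, b) = 0 ∧
    ∃ φ : T'.V → T.V,
      Function.Surjective φ ∧ φ a = φ b ∧
      (∀ x y : T'.V, φ x = φ y → x = y ∨ s(x, y) = s(a, b)) ∧
      (∀ i : Fin n, φ (T'.leaf i) = T.leaf i) ∧
      (∀ u v : T.V, T.G.Adj u v ↔
        ∃ x y : T'.V, φ x = u ∧ φ y = v ∧ T'.G.Adj x y ∧ s(x, y) ≠ s(a, b)) ∧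
      (∀ x y : T'.V, T'.G.Adj x y → s(x, y) ≠ s(a, b) → T.w s(φ x, φ y) = T'.w s(x, y))

/-- Replace the weight function of `T`. -/
def reweight (T : WTree n) (w' : Sym2 T.V → ℝ)
    (h : ∀ e, e ∉ T.G.edgeSet → w' e = 0) : WTree n :=
  { T with w := w', wSupport := h }

end WTree


open SimpleGraph in
private lemma fwd_neighbor {V : Type} {G : SimpleGraph V} :
    ∀ {a b : V} (p : G.Walk a b) (u : V), u ∈ p.support → u ≠ b →
      ∃ x ∈ p.support, G.Adj u x := by
  intro a b p
  induction p with
  | nil =>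
    intro u hu hub
    rw [Walk.support_nil, List.mem_singleton] at hu
    exact absurd hu hub
  | @cons a c b h q ih =>
    intro u hu hub
    rw [Walk.support_cons, List.mem_cons] at hu
    rcases hu with rfl | hu
    · refine ⟨c, ?_, h⟩
      rw [Walk.support_cons]
      exact List.mem_cons_of_mem _ q.start_mem_support
    · obtain ⟨x, hx, hadj⟩ := ih u hu hub
      refine ⟨x, ?_, hadj⟩
      rw [Walk.support_cons]
      exact List.mem_cons_of_mem _ hx

open SimpleGraph in
private lemma internal_two {V : Type} {G : SimpleGraph V} :
    ∀ {a b : V} (p : G.Walk a b), p.IsPath → ∀ u ∈ p.support, u ≠ a → u ≠ b →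
      ∃ x y : V, x ≠ y ∧ G.Adj u x ∧ G.Adj u y ∧ x ∈ p.support ∧ y ∈ p.support := by
  intro a b p
  induction p with
  | nil =>
    intro _ u hu ha _
    rw [Walk.support_nil, List.mem_singleton] at hu
    exact absurd hu ha
  | @cons a c b h q ih =>
    intro hp u hu hua hub
    rw [Walk.support_cons, List.mem_cons] at hu
    rcases hu with rfl | hu
    · exact absurd rfl hua
    rw [Walk.cons_isPath_iff] at hp
    by_cases huc : u = c
    · subst huc
      obtain ⟨y, hy, hadjy⟩ := fwd_neighbor q u q.start_mem_support hub
      refine ⟨a, y, ?_, h.symm, hadjy, ?_, ?_⟩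
      · rintro rfl; exact hp.2 hy
      · rw [Walk.support_cons]; exact List.mem_cons_self
      · rw [Walk.support_cons]; exact List.mem_cons_of_mem _ hy
    · obtain ⟨x, y, hxy, hx, hy, hxs, hys⟩ := ih hp.1 u hu huc hub
      exact ⟨x, y, hxy, hx, hy,
        by rw [Walk.support_cons]; exact List.mem_cons_of_mem _ hxs,
        by rw [Walk.support_cons]; exact List.mem_cons_of_mem _ hys⟩

open SimpleGraph in
private lemma walk_escape {V : Type} {G : SimpleGraph V} {S : Set V} {v : V}
    (hS : ∀ u ∈ S, u ≠ v → ∀ z, G.Adj u z → z ∈ S) :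
    ∀ {a b : V} (q : G.Walk a b), a ∈ S → b ∉ S → v ∈ q.support := by
  intro a b q
  induction q with
  | nil => intro ha hb; exact absurd ha hb
  | @cons a c b h q ih =>
    intro ha hb
    by_cases hav : a = v
    · rw [Walk.support_cons, ← hav]; exact List.mem_cons_self
    · rw [Walk.support_cons]; exact List.mem_cons_of_mem _ (ih (hS a ha hav c h) hb)

/-- if `2 ≤ k ≤ n-2`, `P` is a weighted tree with leaf set `[n]` and the
leaves `i`, `l` are neighbours, then `D_{{i}∪X}(P) − D_{{l}∪X}(P)` does not depend on the
`(k-1)`-subset `X` of `[n] - {i,l}`. -/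
theorem statement4 (n k : ℕ) (h2 : 2 ≤ k) (hk : k ≤ n - 2)
    (P : WTree n) (i l : Fin n) (hnb : P.Neighbours i l)
    (X X' : Finset (Fin n)) (hX : X.card = k - 1) (hX' : X'.card = k - 1)
    (hiX : i ∉ X) (hlX : l ∉ X) (hiX' : i ∉ X') (hlX' : l ∉ X') :
    P.D (insert i X) - P.D (insert l X) = P.D (insert i X') - P.D (insert l X') := by
  classical
  haveI : Fintype P.V := P.fintypeV
  obtain ⟨hil, p, hp, v, ⟨hvsup, hvnode⟩, hvuniq⟩ := hnb
  have huniq : ∀ {u w : P.V} (q q' : P.G.Walk u w), q.IsPath → q'.IsPath → q = q' := by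
    intro u w q q' hq hq'
    obtain ⟨r, -, hr⟩ := P.isTree.existsUnique_path u w
    rw [hr q hq, hr q' hq']
  have pe_eq : ∀ {u w : P.V} (q : P.G.Walk u w), q.IsPath →
      P.pathEdges u w = {e | e ∈ q.edges} := by
    intro u w q hq
    ext e
    constructor
    · rintro ⟨q', hq', he⟩
      rwa [huniq q' q hq' hq] at he
    · intro he
      exact ⟨q, hq, he⟩
  have hdeg_leaf : ∀ x : Fin n, (P.G.neighborSet (P.leaf x)).ncard = 1 :=
    fun x => (P.leafSpec _).mpr ⟨x, rfl⟩
  have hlil : P.leaf i ≠ P.leaf l := fun h => hil (P.leafInj h)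
  have hclosed : ∀ u ∈ {u : P.V | u ∈ p.support}, u ≠ v →
      ∀ z, P.G.Adj u z → z ∈ {u : P.V | u ∈ p.support} := by
    intro u hu huv z hz
    simp only [Set.mem_setOf_eq] at hu ⊢
    by_cases hua : u = P.leaf i
    · subst hua
      obtain ⟨x, hx, hadj⟩ := fwd_neighbor p _ hu hlil
      obtain ⟨a, ha⟩ := Set.ncard_eq_one.mp (hdeg_leaf i)
      have hxN : x ∈ P.G.neighborSet (P.leaf i) := hadj
      have hzN : z ∈ P.G.neighborSet (P.leaf i) := hz
      rw [ha, Set.mem_singleton_iff] at hxN hzN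
      rw [hzN, ← hxN]
      exact hx
    by_cases hub : u = P.leaf l
    · subst hub
      have hu' : P.leaf l ∈ p.reverse.support := by
        rw [SimpleGraph.Walk.support_reverse]; exact List.mem_reverse.mpr hu
      obtain ⟨x, hx, hadj⟩ := fwd_neighbor p.reverse _ hu' hlil.symm
      obtain ⟨a, ha⟩ := Set.ncard_eq_one.mp (hdeg_leaf l)
      have hxN : x ∈ P.G.neighborSet (P.leaf l) := hadj
      have hzN : z ∈ P.G.neighborSet (P.leaf l) := hz
      rw [ha, Set.mem_singleton_iff] at hxN hzN
      rw [SimpleGraph.Walk.support_reverse] at hx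
      rw [hzN, ← hxN]
      exact List.mem_reverse.mp hx
    · obtain ⟨x, y, hxy, hx, hy, hxs, hys⟩ := internal_two p hp u hu hua hub
      have hnn : ¬ P.IsNode u := fun h => huv (hvuniq u ⟨hu, h⟩)
      have hle : (P.G.neighborSet u).ncard ≤ 2 := by
        unfold WTree.IsNode WTree.deg at hnn; omega
      have hsub : ({x, y} : Set P.V) ⊆ P.G.neighborSet u := by
        intro z' hz'
        rcases hz' with rfl | hz'
        · exact hx
        · rw [Set.mem_singleton_iff] at hz'; subst hz'; exact hy
      have heq : ({x, y} : Set P.V) = P.G.neighborSet u :=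
        Set.eq_of_subset_of_ncard_le hsub
          (by rw [Set.ncard_pair hxy]; exact hle) (Set.toFinite _)
      have hzN : z ∈ P.G.neighborSet u := hz
      rw [← heq] at hzN
      rcases hzN with rfl | hzN
      · exact hxs
      · rw [Set.mem_singleton_iff] at hzN; subst hzN; exact hys
  have hleaf_not : ∀ j : Fin n, j ≠ i → j ≠ l → P.leaf j ∉ p.support := by
    intro j hji hjl hmem
    obtain ⟨x, y, hxy, hx, hy, -, -⟩ := internal_two p hp _ hmem
      (fun h => hji (P.leafInj h)) (fun h => hjl (P.leafInj h))
    obtain ⟨a, ha⟩ := Set.ncard_eq_one.mp (hdeg_leaf j)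
    have hxN : x ∈ P.G.neighborSet (P.leaf j) := hx
    have hyN : y ∈ P.G.neighborSet (P.leaf j) := hy
    rw [ha, Set.mem_singleton_iff] at hxN hyN
    exact hxy (hxN.trans hyN.symm)
  have hv_in : ∀ (u : P.V), u ∈ p.support → ∀ (j : Fin n), j ≠ i → j ≠ l →
      ∀ q : P.G.Walk u (P.leaf j), v ∈ q.support := by
    intro u hu j hji hjl q
    exact walk_escape hclosed q hu (hleaf_not j hji hjl)
  have pe_split : ∀ {u w : P.V} (q : P.G.Walk u w) (hq : q.IsPath)
      (hv : v ∈ q.support),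
      P.pathEdges u w = P.pathEdges u v ∪ P.pathEdges v w ∧
        Disjoint (P.pathEdges u v) (P.pathEdges v w) := by
    intro u w q hq hv
    have h1 := hq.takeUntil hv
    have h2 := hq.dropUntil hv
    have he : q.edges = (q.takeUntil v hv).edges ++ (q.dropUntil v hv).edges := by
      conv_lhs => rw [← q.take_spec hv]
      rw [SimpleGraph.Walk.edges_append]
    rw [pe_eq q hq, pe_eq _ h1, pe_eq _ h2]
    constructor
    · ext e
      simp only [Set.mem_setOf_eq, Set.mem_union, he, List.mem_append]
    · have hnd := hq.isTrail.edges_nodup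
      rw [he, List.nodup_append] at hnd
      rw [Set.disjoint_left]
      intro e he1 he2
      exact hnd.2.2 e he1 e he2 rfl
  have pe_tri : ∀ a b : P.V, P.pathEdges a b ⊆ P.pathEdges a v ∪ P.pathEdges v b := by
    intro a b e he
    obtain ⟨q1, hq1, -⟩ := P.isTree.existsUnique_path a v
    obtain ⟨q2, hq2, -⟩ := P.isTree.existsUnique_path v b
    have hb := (q1.append q2).bypass_isPath
    rw [pe_eq _ hb] at he
    have h2 := (q1.append q2).edges_bypass_subset he
    rw [SimpleGraph.Walk.edges_append, List.mem_append] at h2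
    rcases h2 with h2 | h2
    · exact Or.inl ⟨q1, hq1, h2⟩
    · exact Or.inr ⟨q2, hq2, h2⟩
  have pe_comm : ∀ a b : P.V, P.pathEdges a b = P.pathEdges b a := by
    intro a b
    ext e
    constructor <;> rintro ⟨q, hq, he⟩ <;>
      exact ⟨q.reverse, hq.reverse,
        by rwa [SimpleGraph.Walk.edges_reverse, List.mem_reverse]⟩
  have pe_loop : ∀ a : P.V, P.pathEdges a a = ∅ := by
    intro a
    ext e
    simp only [Set.mem_empty_iff_false, iff_false]
    rintro ⟨q, hq, he⟩
    rw [huniq q SimpleGraph.Walk.nil hq SimpleGraph.Walk.IsPath.nil] at he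
    simp at he
  have key : ∀ (Y : Finset (Fin n)), (∀ j ∈ Y, j ≠ i ∧ j ≠ l) → Y.Nonempty →
      ∀ c : Fin n, P.leaf c ∈ p.support →
      P.subtreeEdges ↑(insert c Y) =
        P.pathEdges (P.leaf c) v ∪ {e | ∃ j ∈ Y, e ∈ P.pathEdges v (P.leaf j)} ∧
      Disjoint (P.pathEdges (P.leaf c) v)
        {e | ∃ j ∈ Y, e ∈ P.pathEdges v (P.leaf j)} := by
    intro Y hY hYne c hc
    have hsplit : ∀ j ∈ Y, P.pathEdges (P.leaf c) (P.leaf j)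
        = P.pathEdges (P.leaf c) v ∪ P.pathEdges v (P.leaf j) ∧
        Disjoint (P.pathEdges (P.leaf c) v) (P.pathEdges v (P.leaf j)) := by
      intro j hj
      obtain ⟨q, hq, -⟩ := P.isTree.existsUnique_path (P.leaf c) (P.leaf j)
      exact pe_split q hq (hv_in _ hc j (hY j hj).1 (hY j hj).2 q)
    constructor
    · ext e
      constructor
      · rintro ⟨a, ha, b, hb, he⟩
        simp only [Finset.coe_insert, Set.mem_insert_iff, Finset.mem_coe] at ha hb
        rcases ha with rfl | ha <;> rcases hb with rfl | hb
        · rw [pe_loop] at he; exact absurd he (Set.notMem_empty e)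
        · rw [(hsplit b hb).1] at he
          rcases he with he | he
          · exact Or.inl he
          · exact Or.inr ⟨b, hb, he⟩
        · rw [pe_comm, (hsplit a ha).1] at he
          rcases he with he | he
          · exact Or.inl he
          · exact Or.inr ⟨a, ha, he⟩
        · rcases pe_tri (P.leaf a) (P.leaf b) he with h2 | h2
          · rw [pe_comm] at h2
            exact Or.inr ⟨a, ha, h2⟩
          · exact Or.inr ⟨b, hb, h2⟩
      · have hmemc : (c : Fin n) ∈ (↑(insert c Y) : Set (Fin n)) := by
          simp
        have hmemY : ∀ j ∈ Y, (j : Fin n) ∈ (↑(insert c Y) : Set (Fin n)) := by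
          intro j hj
          simp [hj]
        rintro (he | ⟨j, hj, he⟩)
        · obtain ⟨j₀, hj₀⟩ := hYne
          refine ⟨c, hmemc, j₀, hmemY j₀ hj₀, ?_⟩
          rw [(hsplit j₀ hj₀).1]
          exact Or.inl he
        · refine ⟨c, hmemc, j, hmemY j hj, ?_⟩
          rw [(hsplit j hj).1]
          exact Or.inr he
    · rw [Set.disjoint_left]
      rintro e he1 ⟨j, hj, he2⟩
      exact Set.disjoint_left.mp (hsplit j hj).2 he1 he2
  have hDval : ∀ (Y : Finset (Fin n)), (∀ j ∈ Y, j ≠ i ∧ j ≠ l) → Y.Nonempty →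
      ∀ c : Fin n, P.leaf c ∈ p.support →
      P.D (insert c Y) = (∑ᶠ e ∈ P.pathEdges (P.leaf c) v, P.w e)
        + ∑ᶠ e ∈ {e | ∃ j ∈ Y, e ∈ P.pathEdges v (P.leaf j)}, P.w e := by
    intro Y hY hYne c hc
    obtain ⟨hequ, hdisj⟩ := key Y hY hYne c hc
    unfold WTree.D
    rw [hequ, finsum_mem_union hdisj (Set.toFinite _) (Set.toFinite _)]
  have hXfacts : ∀ (Y : Finset (Fin n)), i ∉ Y → l ∉ Y → ∀ j ∈ Y, j ≠ i ∧ j ≠ l := by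
    intro Y hiY hlY j hj
    exact ⟨fun h => hiY (h ▸ hj), fun h => hlY (h ▸ hj)⟩
  have hne : ∀ (Y : Finset (Fin n)), Y.card = k - 1 → Y.Nonempty := by
    intro Y hcard
    rw [← Finset.card_pos, hcard]
    omega
  rw [hDval X (hXfacts X hiX hlX) (hne X hX) i p.start_mem_support,
    hDval X (hXfacts X hiX hlX) (hne X hX) l p.end_mem_support,
    hDval X' (hXfacts X' hiX' hlX') (hne X' hX') i p.start_mem_support,
    hDval X' (hXfacts X' hiX' hlX') (hne X' hX') l p.end_mem_support]
  ring
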